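/- With the notation of the geometric setup: if F_1,…,F_s ∈ K[x_1,…,x_n] satisfy rad(I_L) = rad((F_1,…,F_s)), then the total number of L'-homogeneous components of F_1,…,F_s (i.e. q_1 + ⋯ + q_s, where q_i is the number of distinct classes modulo L' of exponent vectors occurring in F_i) is at least δ(D_{L'}^{L})_Ω. -/

import Mathlib

open MvPolynomial

/-- A polynomial is `L`-homogeneous if the difference of any two exponent vectors
occurring in its support lies in `L`. -/
def IsLHomog {n : ℕ} {K : Type*} [CommSemiring K] (L : Set (Fin n → ℤ))
    (F : MvPolynomial (Fin n) K) : Prop :=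
  ∀ u ∈ F.support, ∀ v ∈ F.support, (fun j => ((u j : ℤ) - (v j : ℤ))) ∈ L

/-- An ideal is `L`-homogeneous if it is generated by `L`-homogeneous polynomials. -/
def IsLHomogIdeal {n : ℕ} {K : Type*} [CommSemiring K] (L : Set (Fin n → ℤ))
    (J : Ideal (MvPolynomial (Fin n) K)) : Prop :=
  ∃ S : Set (MvPolynomial (Fin n) K), (∀ F ∈ S, IsLHomog L F) ∧ J = Ideal.span S

/-- The positive part `u⁺` of an integer vector, as an exponent vector. -/
noncomputable def posPart {n : ℕ} (u : Fin n → ℤ) : Fin n →₀ ℕ :=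
  Finsupp.equivFunOnFinite.symm (fun j => (u j).toNat)

/-- The lattice ideal `I_L = ⟨x^{u⁺} - x^{u⁻} : u ∈ L⟩`. -/
noncomputable def latticeIdeal {n : ℕ} (K : Type*) [CommRing K] (L : AddSubgroup (Fin n → ℤ)) :
    Ideal (MvPolynomial (Fin n) K) :=
  Ideal.span {F | ∃ u ∈ L, F = monomial (posPart u) (1 : K) - monomial (posPart (-u)) (1 : K)}

/-- The saturation of a lattice `L ⊆ ℤⁿ`. -/
def satSet {n : ℕ} (L : AddSubgroup (Fin n → ℤ)) : Set (Fin n → ℤ) :=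
  {α | ∃ d : ℤ, d ≠ 0 ∧ d • α ∈ L}

/-- The arithmetical rank of an ideal. -/
noncomputable def ara {R : Type*} [CommSemiring R] (J : Ideal R) : ℕ :=
  sInf {s | ∃ F : Fin s → R, (∀ i, F i ∈ J) ∧ J.radical = (Ideal.span (Set.range F)).radical}

/-- The `L`-homogeneous arithmetical rank of an ideal. -/
noncomputable def araH {n : ℕ} {K : Type*} [CommSemiring K] (L : Set (Fin n → ℤ))
    (J : Ideal (MvPolynomial (Fin n) K)) : ℕ :=
  sInf {s | ∃ F : Fin s → MvPolynomial (Fin n) K, (∀ i, IsLHomog L (F i)) ∧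
    J.radical = (Ideal.span (Set.range F)).radical}

/-- The cone `pos_ℚ(v₁,…,vₙ)` spanned by finitely many vectors of `ℚ^m`. -/
def posQ {n m : ℕ} (v : Fin n → Fin m → ℚ) : Set (Fin m → ℚ) :=
  {x | ∃ d : Fin n → ℚ, (∀ i, 0 ≤ d i) ∧ x = ∑ i, d i • v i}

/-- The subcone `σ(E) = pos_ℚ(rᵢ : i ∈ E)`. -/
def posE {t m : ℕ} (r : Fin t → Fin m → ℚ) (E : Finset (Fin t)) : Set (Fin m → ℚ) :=
  {x | ∃ d : Fin t → ℚ, (∀ i, 0 ≤ d i) ∧ (∀ i ∉ E, d i = 0) ∧ x = ∑ i, d i • r i}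

/-- The relative interior `relint_ℚ(pos_ℚ(rᵢ : i ∈ E))`. -/
def relintE {t m : ℕ} (r : Fin t → Fin m → ℚ) (E : Finset (Fin t)) : Set (Fin m → ℚ) :=
  {x | ∃ d : Fin t → ℚ, (∀ i ∈ E, 0 < d i) ∧ (∀ i ∉ E, d i = 0) ∧ x = ∑ i, d i • r i}

/-- `F` is a face of the cone `σ`: it is cut out by a supporting linear functional. -/
def IsFaceOf {m : ℕ} (σ F : Set (Fin m → ℚ)) : Prop :=
  ∃ c : Fin m → ℚ, (∀ x ∈ σ, 0 ≤ ∑ j, c j * x j) ∧ F = σ ∩ {x | ∑ j, c j * x j = 0}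

/-- The ray spanned by a vector `v`. -/
def rayOf {m : ℕ} (v : Fin m → ℚ) : Set (Fin m → ℚ) := {x | ∃ q : ℚ, 0 ≤ q ∧ x = q • v}

/-- Cast a family of integer vectors to rational vectors. -/
def castQ {n m : ℕ} (a : Fin n → Fin m → ℤ) : Fin n → Fin m → ℚ := fun i j => (a i j : ℚ)

/-- `T` is a face of the simplicial complex `D` (with vertices `𝔼₁,…,𝔼_f`) determined by the
projected cone data `rB`: the relative interiors of the cones `pos_ℚ(rB j : j ∈ 𝔼ᵢ)`, `i ∈ T`,
have a common point. -/
def DFace {t f m : ℕ} (rB : Fin t → Fin m → ℚ) (𝔼 : Fin f → Finset (Fin t))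
    (T : Set (Fin f)) : Prop :=
  (⋂ j ∈ T, relintE rB (𝔼 j)).Nonempty

/-- The cone `cone(N)` of a monomial with exponent vector `u`:
the intersection of all subcones `σ(E)` containing all the `aᵢ` with `i` in the support of `u`. -/
def coneOf {n t m : ℕ} (aQ : Fin n → Fin m → ℚ) (rQ : Fin t → Fin m → ℚ)
    (u : Fin n →₀ ℕ) : Set (Fin m → ℚ) :=
  ⋂ E ∈ {E : Finset (Fin t) | ∀ i ∈ u.support, aQ i ∈ posE rQ E}, posE rQ E

/-- The complement of the `{0,1}`-skeleton of the simplicial complex determined by `rB, 𝔼`: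
two distinct vertices are adjacent iff they are not joined by an edge of the complex. -/
def compSkel {t f m : ℕ} (rB : Fin t → Fin m → ℚ) (𝔼 : Fin f → Finset (Fin t)) :
    SimpleGraph (Fin f) where
  Adj i j := i ≠ j ∧ ¬ DFace rB 𝔼 {i, j}
  symm := by
    constructor
    intro i j h
    exact ⟨h.1.symm, by rw [Set.pair_comm]; exact h.2⟩
  loopless := ⟨fun i h => h.1 rfl⟩

/-- An `Ω`-matching: a finite set of pairwise disjoint nonempty faces of the complex. -/
def IsOmegaMatching {t f m : ℕ} (rB : Fin t → Fin m → ℚ) (𝔼 : Fin f → Finset (Fin t))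
    (M : Finset (Finset (Fin f))) : Prop :=
  (∀ T ∈ M, T.Nonempty ∧ DFace rB 𝔼 (T : Set (Fin f))) ∧
    (M : Set (Finset (Fin f))).Pairwise Disjoint

/-- The support cardinality of a matching. -/
def suppCard {f : ℕ} (M : Finset (Finset (Fin f))) : ℕ := (M.biUnion id).card

/-- `δ(D)_Ω`: the minimum cardinality of a maximal `Ω`-matching. -/
noncomputable def deltaOmega {t f m : ℕ} (rB : Fin t → Fin m → ℚ)
    (𝔼 : Fin f → Finset (Fin t)) : ℕ :=
  sInf {s | ∃ M : Finset (Finset (Fin f)), IsOmegaMatching rB 𝔼 M ∧ M.card = s ∧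
    ∀ M' : Finset (Finset (Fin f)), IsOmegaMatching rB 𝔼 M' → suppCard M' ≤ suppCard M}

/-- The number of `L'`-homogeneous components of a polynomial: the number of distinct classes
modulo `L'` of exponent vectors occurring in its support. -/
noncomputable def numComponents {n : ℕ} {K : Type*} [CommSemiring K]
    (L' : AddSubgroup (Fin n → ℤ)) (F : MvPolynomial (Fin n) K) : ℕ :=
  letI := Classical.decEq ((Fin n → ℤ) ⧸ L')
  (F.support.image (fun u =>
    (QuotientAddGroup.mk (fun j => (u j : ℤ)) : (Fin n → ℤ) ⧸ L'))).card

namespace Stmt18Aux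


/-- dot product on `ℚ^m`. -/
def dot {m : ℕ} (c x : Fin m → ℚ) : ℚ := ∑ j, c j * x j

variable {m : ℕ}

lemma dot_add_right (c x y : Fin m → ℚ) : dot c (x + y) = dot c x + dot c y := by
  simp [dot, mul_add, Finset.sum_add_distrib]

lemma dot_smul_right (c : Fin m → ℚ) (q : ℚ) (x : Fin m → ℚ) : dot c (q • x) = q * dot c x := by
  simp [dot, Finset.mul_sum]; congr 1; ext j; ring

lemma dot_add_left (c d x : Fin m → ℚ) : dot (c + d) x = dot c x + dot d x := by
  simp [dot, add_mul, Finset.sum_add_distrib]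

lemma dot_smul_left (q : ℚ) (c x : Fin m → ℚ) : dot (q • c) x = q * dot c x := by
  simp [dot, Finset.mul_sum]; congr 1; ext j; ring

lemma dot_zero_right (c : Fin m → ℚ) : dot c 0 = 0 := by simp [dot]

lemma dot_sum_right {ι : Type*} (c : Fin m → ℚ) (S : Finset ι) (w : ι → Fin m → ℚ) :
    dot c (∑ i ∈ S, w i) = ∑ i ∈ S, dot c (w i) := by
  classical
  induction S using Finset.induction_on with
  | empty => simp [dot]
  | insert _ _ h ih => rw [Finset.sum_insert h, dot_add_right, ih, Finset.sum_insert h]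

lemma dot_sum_smul {ι : Type*} (c : Fin m → ℚ) (S : Finset ι) (d : ι → ℚ) (v : ι → Fin m → ℚ) :
    dot c (∑ i ∈ S, d i • v i) = ∑ i ∈ S, d i * dot c (v i) := by
  rw [dot_sum_right]; simp [dot_smul_right]

lemma dot_self_neg (b : Fin m → ℚ) (hb : b ≠ 0) : dot (-b) b < 0 := by
  have h1 : dot (-b) b = -∑ j, b j * b j := by
    simp [dot, Finset.sum_neg_distrib]
  have h2 : 0 < ∑ j, b j * b j := by
    have hb' : ∃ j, b j ≠ 0 := by
      by_contra h; push_neg at h; exact hb (funext h)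
    obtain ⟨j, hj⟩ := hb'
    apply Finset.sum_pos' (fun i _ => mul_self_nonneg _) ⟨j, Finset.mem_univ j, mul_self_pos.mpr hj⟩
  rw [h1]; linarith

/-- Farkas' lemma for finitely generated cones over `ℚ`, by induction. -/
lemma farkas : ∀ (p : ℕ) (v : Fin p → Fin m → ℚ) (b : Fin m → ℚ),
    (∃ lam : Fin p → ℚ, (∀ i, 0 ≤ lam i) ∧ b = ∑ i, lam i • v i) ∨
    (∃ c : Fin m → ℚ, (∀ i, 0 ≤ dot c (v i)) ∧ dot c b < 0) := by
  intro p
  induction p with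
  | zero =>
    intro v b
    by_cases hb : b = 0
    · exact Or.inl ⟨fun i => 0, fun i => le_rfl, by simp [hb]⟩
    · exact Or.inr ⟨-b, fun i => i.elim0, dot_self_neg b hb⟩
  | succ p ih =>
    intro v b
    rcases ih (fun i => v i.castSucc) b with ⟨lam, hlam, hb⟩ | ⟨c, hc, hcb⟩
    · left
      refine ⟨Fin.snoc lam 0, ?_, ?_⟩
      · intro i
        induction i using Fin.lastCases with
        | last => simp
        | cast i => simpa using hlam i
      · rw [Fin.sum_univ_castSucc]; simp [hb]
    · by_cases hlast : 0 ≤ dot c (v (Fin.last p))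
      · right
        refine ⟨c, ?_, hcb⟩
        intro i
        induction i using Fin.lastCases with
        | last => exact hlast
        | cast i => exact hc i
      · push_neg at hlast
        set α := dot c (v (Fin.last p)) with hα
        have hαneg : α < 0 := hlast
        have hαne : (-α) ≠ 0 := by linarith
        set β : Fin p → ℚ := fun i => dot c (v i.castSucc) / (-α) with hβ
        have hβnn : ∀ i, 0 ≤ β i := fun i => div_nonneg (hc i) (by linarith)
        set vt : Fin p → Fin m → ℚ := fun i => v i.castSucc + β i • v (Fin.last p) with hvt
        set γ₀ : ℚ := dot c b / (-α) with hγ₀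
        have hγ₀neg : γ₀ < 0 := div_neg_of_neg_of_pos hcb (by linarith)
        set bt : Fin m → ℚ := b + γ₀ • v (Fin.last p) with hbt
        rcases ih vt bt with ⟨mu, hmu, hbtsum⟩ | ⟨d, hd, hdbt⟩
        · left
          set γ : ℚ := (∑ i, mu i * β i) - γ₀ with hγ
          have hγnn : 0 ≤ γ := by
            have : 0 ≤ ∑ i, mu i * β i :=
              Finset.sum_nonneg fun i _ => mul_nonneg (hmu i) (hβnn i)
            linarith
          refine ⟨Fin.snoc mu γ, ?_, ?_⟩
          · intro i
            induction i using Fin.lastCases with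
            | last => simpa using hγnn
            | cast i => simpa using hmu i
          · rw [Fin.sum_univ_castSucc]
            simp only [Fin.snoc_castSucc, Fin.snoc_last]
            have hb' : b = bt - γ₀ • v (Fin.last p) := by rw [hbt]; abel
            rw [hb', hbtsum, hvt]
            simp only [smul_add, Finset.sum_add_distrib, smul_smul]
            rw [hγ, sub_smul, ← Finset.sum_smul]
            abel
        · right
          set c' : Fin m → ℚ := d + (dot d (v (Fin.last p)) / (-α)) • c with hc'
          have hkey : ∀ x : Fin m → ℚ, dot c' x = dot d x + (dot d (v (Fin.last p)) / (-α)) * dot c x := by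
            intro x; rw [hc', dot_add_left, dot_smul_left]
          refine ⟨c', ?_, ?_⟩
          · intro i
            induction i using Fin.lastCases with
            | last =>
              rw [hkey]
              rw [← hα]
              field_simp
              rw [div_self (ne_of_lt hαneg)]; simp
            | cast i =>
              have h1 : dot d (vt i) = dot d (v i.castSucc) + β i * dot d (v (Fin.last p)) := by
                rw [hvt]; simp only []
                rw [dot_add_right, dot_smul_right]
              have := hd i
              rw [h1] at this
              rw [hkey, hβ] at *
              -- goal : 0 ≤ dot d (v i.castSucc) + dot d (v last)/(-α) * dot c (v i.castSucc)
              have heq : dot d (v i.castSucc) + dot d (v (Fin.last p)) / (-α) * dot c (v i.castSucc)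
                  = dot d (v i.castSucc) + dot c (v i.castSucc) / (-α) * dot d (v (Fin.last p)) := by
                ring
              rw [heq]; exact this
          · have h1 : dot d bt = dot d b + γ₀ * dot d (v (Fin.last p)) := by
              rw [hbt, dot_add_right, dot_smul_right]
            rw [hkey]
            have heq : dot d b + dot d (v (Fin.last p)) / (-α) * dot c b
                = dot d b + γ₀ * dot d (v (Fin.last p)) := by
              rw [hγ₀]; ring
            rw [heq, ← h1]; exact hdbt




lemma dot_neg_right (c x : Fin m → ℚ) : dot c (-x) = -dot c x := by
  simp [dot, Finset.sum_neg_distrib]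

lemma dot_snoc (c x : Fin m → ℚ) (γ δ : ℚ) :
    dot (m := m + 1) (Fin.snoc c γ) (Fin.snoc x δ) = dot c x + γ * δ := by
  simp [dot, Fin.sum_univ_castSucc]


lemma farkas' {ι : Type*} [Fintype ι] (v : ι → Fin m → ℚ) (b : Fin m → ℚ) :
    (∃ lam : ι → ℚ, (∀ i, 0 ≤ lam i) ∧ b = ∑ i, lam i • v i) ∨
    (∃ c : Fin m → ℚ, (∀ i, 0 ≤ dot c (v i)) ∧ dot c b < 0) := by
  classical
  obtain e := Fintype.equivFin ι
  rcases farkas (Fintype.card ι) (fun i => v (e.symm i)) b with ⟨lam, h1, h2⟩ | ⟨c, h1, h2⟩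
  · left
    refine ⟨fun i => lam (e i), fun i => h1 (e i), ?_⟩
    have heq := Fintype.sum_equiv e.symm (fun i => lam i • v (e.symm i))
      (fun i => lam (e i) • v i) (fun x => by simp)
    rw [h2, heq]
  · right
    refine ⟨c, fun i => by simpa using h1 (e i), h2⟩

lemma gordan {n' : ℕ} (v : Fin n' → Fin m → ℚ) (τ : Set (Fin n')) :
    (∃ c : Fin m → ℚ, (∀ l ∈ τ, dot c (v l) = 0) ∧ (∀ l ∉ τ, 0 < dot c (v l))) ∨
    (∃ lam : Fin n' → ℚ, (∀ l ∉ τ, 0 ≤ lam l) ∧ (∃ l, l ∉ τ ∧ 0 < lam l) ∧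
      ∑ l, lam l • v l = 0) := by
  classical
  set w1 : Fin n' → ℚ := fun l => if l ∈ τ then 0 else -1 with hw1
  set W : Fin n' → Fin m → ℚ := fun l => if l ∈ τ then -(v l) else 0 with hW
  set V : Fin n' ⊕ Fin n' → Fin (m + 1) → ℚ :=
    Sum.elim (fun l => Fin.snoc (v l) (w1 l)) (fun l => Fin.snoc (W l) 0) with hV
  set b : Fin (m + 1) → ℚ := Fin.snoc 0 (-1) with hb
  rcases farkas' V b with ⟨lam, hnn, hsum⟩ | ⟨C, hC, hCb⟩
  · right
    have hlast : (-1 : ℚ) = ∑ l, lam (Sum.inl l) * w1 l := by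
      have h := congrFun hsum (Fin.last m)
      simp only [hb, hV, Fin.snoc_last, Fintype.sum_sum_type, Finset.sum_apply,
        Pi.smul_apply, smul_eq_mul, Sum.elim_inl, Sum.elim_inr, mul_zero,
        Finset.sum_const_zero, add_zero] at h
      exact h
    have hone : ∑ l, lam (Sum.inl l) * (if l ∈ τ then 0 else 1) = 1 := by
      have heq : ∑ l, lam (Sum.inl l) * (if l ∈ τ then (0:ℚ) else 1)
          = - ∑ l, lam (Sum.inl l) * w1 l := by
        rw [← Finset.sum_neg_distrib]
        refine Finset.sum_congr rfl fun l _ => ?_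
        by_cases h : l ∈ τ <;> simp [hw1, h]
      rw [heq, ← hlast]; norm_num
    have hex : ∃ l, l ∉ τ ∧ 0 < lam (Sum.inl l) := by
      have hne : ∑ l, lam (Sum.inl l) * (if l ∈ τ then (0:ℚ) else 1) ≠ 0 := by
        rw [hone]; norm_num
      obtain ⟨l, _, hl⟩ := Finset.exists_ne_zero_of_sum_ne_zero hne
      by_cases h : l ∈ τ
      · simp [h] at hl
      · refine ⟨l, h, ?_⟩
        simp [h] at hl
        exact lt_of_le_of_ne (hnn (Sum.inl l)) (Ne.symm hl)
    refine ⟨fun l => lam (Sum.inl l) - if l ∈ τ then lam (Sum.inr l) else 0, ?_, ?_, ?_⟩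
    · intro l hl; simp only [if_neg hl, sub_zero]; exact hnn _
    · obtain ⟨l, hl, hpos⟩ := hex
      exact ⟨l, hl, by simp only [if_neg hl, sub_zero]; exact hpos⟩
    · funext jj
      have h := congrFun hsum jj.castSucc
      simp only [hb, hV, Fin.snoc_castSucc, Fintype.sum_sum_type, Finset.sum_apply,
        Pi.smul_apply, smul_eq_mul, Sum.elim_inl, Sum.elim_inr, Pi.zero_apply] at h
      have h2 : ∀ l : Fin n', lam (Sum.inr l) * W l jj
          = -((if l ∈ τ then lam (Sum.inr l) else 0) * v l jj) := by
        intro l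
        by_cases hl : l ∈ τ <;> simp [hW, hl]
      rw [Finset.sum_congr rfl (fun l _ => h2 l)] at h
      simp only [Finset.sum_apply, Pi.smul_apply, smul_eq_mul, Pi.zero_apply]
      rw [Finset.sum_neg_distrib] at h
      have h3 : ∑ l, lam (Sum.inl l) * v l jj
          - ∑ l, (if l ∈ τ then lam (Sum.inr l) else 0) * v l jj = 0 := by linarith
      have h4 : ∑ l, (lam (Sum.inl l) - if l ∈ τ then lam (Sum.inr l) else 0) * v l jj
          = ∑ l, lam (Sum.inl l) * v l jj
            - ∑ l, (if l ∈ τ then lam (Sum.inr l) else 0) * v l jj := by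
        rw [← Finset.sum_sub_distrib]
        exact Finset.sum_congr rfl fun l _ => by ring
      rw [h4]
      exact h3
  · left
    set c : Fin m → ℚ := Fin.init C with hc
    set u : ℚ := C (Fin.last m) with hu
    have hCsn : C = Fin.snoc c u := by rw [hc, hu, Fin.snoc_init_self]
    have hupos : 0 < u := by
      rw [hCsn, hb, dot_snoc, dot_zero_right] at hCb
      linarith
    refine ⟨c, ?_, ?_⟩
    · intro l hl
      have h1 := hC (Sum.inl l)
      have h2 := hC (Sum.inr l)
      rw [hCsn] at h1 h2
      simp only [hV, Sum.elim_inl, Sum.elim_inr] at h1 h2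
      rw [dot_snoc] at h1
      rw [dot_snoc] at h2
      simp only [hw1, hW, if_pos hl, dot_neg_right, mul_zero, add_zero] at h1 h2
      linarith
    · intro l hl
      have h1 := hC (Sum.inl l)
      rw [hCsn] at h1
      simp only [hV, Sum.elim_inl] at h1
      rw [dot_snoc] at h1
      simp only [hw1, if_neg hl, mul_neg, mul_one] at h1
      linarith



section Geo

variable {k m t : ℕ}

/-- cone generated by `v i`, `i ∈ S`. -/
def cs (v : Fin k → Fin m → ℚ) (S : Set (Fin k)) : Set (Fin m → ℚ) :=
  {x | ∃ d : Fin k → ℚ, (∀ i, 0 ≤ d i) ∧ (∀ i, i ∉ S → d i = 0) ∧ x = ∑ i, d i • v i}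

lemma posE_eq_cs (r : Fin t → Fin m → ℚ) (E : Finset (Fin t)) : posE r E = cs r ↑E := by
  ext x
  constructor
  · rintro ⟨d, h1, h2, h3⟩; exact ⟨d, h1, fun i hi => h2 i (by simpa using hi), h3⟩
  · rintro ⟨d, h1, h2, h3⟩; exact ⟨d, h1, fun i hi => h2 i (by simpa using hi), h3⟩

lemma posQ_eq_cs (v : Fin k → Fin m → ℚ) : posQ v = cs v Set.univ := by
  ext x
  constructor
  · rintro ⟨d, h1, h3⟩; exact ⟨d, h1, fun i hi => absurd (Set.mem_univ i) hi, h3⟩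
  · rintro ⟨d, h1, _, h3⟩; exact ⟨d, h1, h3⟩

lemma cs_zero_mem (v : Fin k → Fin m → ℚ) (S : Set (Fin k)) : 0 ∈ cs v S :=
  ⟨0, fun _ => le_rfl, fun _ _ => rfl, by simp⟩

lemma cs_add_mem {v : Fin k → Fin m → ℚ} {S : Set (Fin k)} {x y : Fin m → ℚ}
    (hx : x ∈ cs v S) (hy : y ∈ cs v S) : x + y ∈ cs v S := by
  obtain ⟨d1, hd1, hz1, hs1⟩ := hx
  obtain ⟨d2, hd2, hz2, hs2⟩ := hy
  refine ⟨d1 + d2, fun i => add_nonneg (hd1 i) (hd2 i),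
    fun i hi => by simp [hz1 i hi, hz2 i hi], ?_⟩
  rw [hs1, hs2, ← Finset.sum_add_distrib]
  refine Finset.sum_congr rfl fun i _ => ?_
  simp [add_smul]

lemma cs_smul_mem {v : Fin k → Fin m → ℚ} {S : Set (Fin k)} {x : Fin m → ℚ} {q : ℚ}
    (hq : 0 ≤ q) (hx : x ∈ cs v S) : q • x ∈ cs v S := by
  obtain ⟨d, hd, hz, hs⟩ := hx
  refine ⟨fun i => q * d i, fun i => mul_nonneg hq (hd i),
    fun i hi => by simp [hz i hi], ?_⟩
  rw [hs, Finset.smul_sum]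
  refine Finset.sum_congr rfl fun i _ => ?_
  rw [smul_smul]

lemma cs_gen_mem {v : Fin k → Fin m → ℚ} {S : Set (Fin k)} {i : Fin k} (hi : i ∈ S)
    {q : ℚ} (hq : 0 ≤ q) : q • v i ∈ cs v S := by
  classical
  refine ⟨fun j => if j = i then q else 0, ?_, ?_, ?_⟩
  · intro j; by_cases h : j = i <;> simp [h, hq]
  · intro j hj
    by_cases h : j = i
    · exact absurd (h ▸ hi) hj
    · simp [h]
  · have hterm : ∀ j : Fin k, ((if j = i then q else 0) • v j) = if j = i then q • v j else 0 :=
      fun j => by by_cases h : j = i <;> simp [h]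
    rw [Finset.sum_congr rfl (fun j _ => hterm j), Finset.sum_ite_eq']
    simp

lemma cs_combo {v : Fin k → Fin m → ℚ} {S : Set (Fin k)} {ι : Type*} [Fintype ι]
    (d : ι → ℚ) (y : ι → Fin m → ℚ) (hd : ∀ i, 0 ≤ d i)
    (hy : ∀ i, d i ≠ 0 → y i ∈ cs v S) : ∑ i, d i • y i ∈ cs v S := by
  classical
  refine Finset.sum_induction _ (fun x => x ∈ cs v S) (fun a b ha hb => cs_add_mem ha hb)
    (cs_zero_mem v S) (fun i _ => ?_)
  by_cases h : d i = 0
  · simp [h, cs_zero_mem]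
  · exact cs_smul_mem (hd i) (hy i h)

lemma cs_mono {v : Fin k → Fin m → ℚ} {S S' : Set (Fin k)} (h : S ⊆ S') :
    cs v S ⊆ cs v S' := by
  rintro x ⟨d, h1, h2, h3⟩
  exact ⟨d, h1, fun i hi => h2 i (fun hmem => hi (h hmem)), h3⟩

lemma posE_mono {r : Fin t → Fin m → ℚ} {E E' : Finset (Fin t)} (h : E ⊆ E') :
    posE r E ⊆ posE r E' := by
  rw [posE_eq_cs, posE_eq_cs]
  exact cs_mono (by simpa using h)

lemma dot_eq (c x : Fin m → ℚ) : (∑ j, c j * x j) = dot c x := rfl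

lemma face_extract {σ G : Set (Fin m → ℚ)} (hG : IsFaceOf σ G) {ι : Type*} [Fintype ι]
    (d : ι → ℚ) (y : ι → Fin m → ℚ) (hd : ∀ i, 0 ≤ d i)
    (hy : ∀ i, d i ≠ 0 → y i ∈ σ) (hsum : (∑ i, d i • y i) ∈ G) :
    ∀ i, d i ≠ 0 → y i ∈ G := by
  obtain ⟨c, hc, hGeq⟩ := hG
  rw [hGeq] at hsum
  obtain ⟨hσ, hzero⟩ := hsum
  have hzero' : ∑ i, d i * dot c (y i) = 0 := by
    rw [← dot_sum_smul]
    exact hzero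
  have hterm : ∀ i ∈ Finset.univ, 0 ≤ d i * dot c (y i) := by
    intro i _
    by_cases h : d i = 0
    · simp [h]
    · exact mul_nonneg (hd i) (hc _ (hy i h))
  have hall := (Finset.sum_eq_zero_iff_of_nonneg hterm).mp hzero'
  intro i hi
  have h0 := hall i (Finset.mem_univ i)
  have hdot : dot c (y i) = 0 := by
    rcases mul_eq_zero.mp h0 with h | h
    · exact absurd h hi
    · exact h
  rw [hGeq]
  exact ⟨hy i hi, hdot⟩

lemma face_combo {v : Fin k → Fin m → ℚ} {S : Set (Fin k)} {G : Set (Fin m → ℚ)}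
    (hG : IsFaceOf (cs v S) G) {ι : Type*} [Fintype ι]
    (d : ι → ℚ) (y : ι → Fin m → ℚ) (hd : ∀ i, 0 ≤ d i)
    (hy : ∀ i, d i ≠ 0 → y i ∈ G) : ∑ i, d i • y i ∈ G := by
  obtain ⟨c, hc, hGeq⟩ := hG
  have hyσ : ∀ i, d i ≠ 0 → y i ∈ cs v S := by
    intro i hi
    have := hy i hi
    rw [hGeq] at this
    exact this.1
  rw [hGeq]
  constructor
  · exact cs_combo d y hd hyσ
  · show (∑ j, c j * (∑ i, d i • y i) j) = 0
    rw [dot_eq, dot_sum_smul]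
    refine Finset.sum_eq_zero fun i _ => ?_
    by_cases h : d i = 0
    · simp [h]
    · have := hy i h
      rw [hGeq] at this
      have h2 : dot c (y i) = 0 := this.2
      rw [h2, mul_zero]

lemma face_inter {σ G1 G2 : Set (Fin m → ℚ)} (h1 : IsFaceOf σ G1) (h2 : IsFaceOf σ G2) :
    IsFaceOf σ (G1 ∩ G2) := by
  obtain ⟨c1, hc1, he1⟩ := h1
  obtain ⟨c2, hc2, he2⟩ := h2
  refine ⟨c1 + c2, ?_, ?_⟩
  · intro x hx
    have ha := hc1 x hx
    have hb := hc2 x hx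
    rw [dot_eq] at ha hb
    rw [dot_eq, dot_add_left]
    linarith
  · ext x
    simp only [Set.mem_inter_iff, he1, he2, Set.mem_setOf_eq]
    constructor
    · rintro ⟨⟨hx, ha⟩, _, hb⟩
      refine ⟨hx, ?_⟩
      rw [dot_eq] at ha hb
      rw [dot_eq, dot_add_left, ha, hb]
      ring
    · rintro ⟨hx, hab⟩
      have ha := hc1 x hx
      have hb := hc2 x hx
      rw [dot_eq, dot_add_left] at hab
      rw [dot_eq] at ha hb
      refine ⟨⟨hx, ?_⟩, hx, ?_⟩
      · rw [dot_eq]; linarith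
      · rw [dot_eq]; linarith

lemma face_biInter {σ : Set (Fin m → ℚ)} {ι : Type*} [DecidableEq ι] {G : ι → Set (Fin m → ℚ)}
    (S : Finset ι) (hne : S.Nonempty) (hG : ∀ i ∈ S, IsFaceOf σ (G i)) :
    IsFaceOf σ (⋂ i ∈ (S : Set ι), G i) := by
  induction hne using Finset.Nonempty.cons_induction with
  | singleton i => simpa using hG i (Finset.mem_singleton_self i)
  | cons i S hi hne ih =>
    have h1 : IsFaceOf σ (⋂ j ∈ (S : Set ι), G j) :=
      ih (fun j hj => hG j (Finset.mem_cons_of_mem hj))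
    have h2 : IsFaceOf σ (G i) := hG i (Finset.mem_cons_self i S)
    have heq : (⋂ j ∈ ((Finset.cons i S hi : Finset ι) : Set ι), G j)
        = G i ∩ ⋂ j ∈ (S : Set ι), G j := by
      simp [Finset.coe_cons, Set.biInter_insert]
    rw [heq]
    exact face_inter h2 h1

end Geo

section Alg

variable {n : ℕ} {K : Type*} [CommRing K]

/-- characteristic point of a subset of variables. -/
noncomputable def pt (τ' : Set (Fin n)) : Fin n → K := fun l =>
  letI := Classical.propDecidable (l ∈ τ')
  if l ∈ τ' then 1 else 0

/-- classical conditional sum of coefficients. -/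
noncomputable def PSum (P : MvPolynomial (Fin n) K) (Q : (Fin n →₀ ℕ) → Prop) : K :=
  ∑ u ∈ P.support,
    (letI := Classical.propDecidable (Q u)
     if Q u then P.coeff u else 0)

lemma PSum_congr {P : MvPolynomial (Fin n) K} {Q Q' : (Fin n →₀ ℕ) → Prop}
    (h : ∀ u, Q u ↔ Q' u) : PSum P Q = PSum P Q' := by
  classical
  unfold PSum
  refine Finset.sum_congr rfl fun u _ => ?_
  exact if_congr (h u) rfl rfl

lemma PSum_congr' {P : MvPolynomial (Fin n) K} {Q Q' : (Fin n →₀ ℕ) → Prop}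
    (h : ∀ u ∈ P.support, Q u ↔ Q' u) : PSum P Q = PSum P Q' := by
  classical
  unfold PSum
  refine Finset.sum_congr rfl fun u hu => ?_
  exact if_congr (h u hu) rfl rfl

lemma PSum_false (P : MvPolynomial (Fin n) K) : PSum P (fun _ => False) = 0 := by
  unfold PSum
  simp

lemma PSum_or (P : MvPolynomial (Fin n) K) (Q R : (Fin n →₀ ℕ) → Prop) :
    PSum P (fun u => Q u ∨ R u)
      = PSum P Q + PSum P R - PSum P (fun u => Q u ∧ R u) := by
  unfold PSum
  rw [← Finset.sum_add_distrib, ← Finset.sum_sub_distrib]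
  refine Finset.sum_congr rfl fun u _ => ?_
  classical
  by_cases hQ : Q u <;> by_cases hR : R u <;>
    simp [hQ, hR]

lemma eval_pt (τ' : Set (Fin n)) (P : MvPolynomial (Fin n) K) :
    eval (pt τ') P = PSum P (fun u => ∀ l, l ∉ τ' → u l = 0) := by
  classical
  rw [eval_eq]
  unfold PSum
  refine Finset.sum_congr rfl fun u _ => ?_
  by_cases h : ∀ l, l ∉ τ' → u l = 0
  · rw [if_pos h]
    have hone : ∀ l ∈ u.support, (pt τ' l : K) ^ u l = 1 := by
      intro l hl
      have hlτ : l ∈ τ' := by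
        by_contra hc
        exact (Finsupp.mem_support_iff.mp hl) (h l hc)
      simp [pt, hlτ]
    rw [Finset.prod_congr rfl hone, Finset.prod_const_one, mul_one]
  · rw [if_neg h]
    push_neg at h
    obtain ⟨l, hl1, hl2⟩ := h
    have hlsup : l ∈ u.support := Finsupp.mem_support_iff.mpr hl2
    have hzero : (pt τ' l : K) ^ u l = 0 := by
      rw [show (pt τ' l : K) = 0 by simp [pt, hl1]]
      exact zero_pow hl2
    rw [Finset.prod_eq_zero hlsup hzero, mul_zero]

lemma eval_pt_monomial (τ' : Set (Fin n)) (u : Fin n →₀ ℕ) :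
    eval (pt τ') (monomial u (1:K))
      = (letI := Classical.propDecidable (∀ l, l ∉ τ' → u l = 0)
         if (∀ l, l ∉ τ' → u l = 0) then 1 else 0) := by
  classical
  rw [eval_monomial, one_mul, Finsupp.prod]
  by_cases h : ∀ l, l ∉ τ' → u l = 0
  · rw [if_pos h]
    refine Finset.prod_eq_one fun l hl => ?_
    have hlτ : l ∈ τ' := by
      by_contra hc
      exact (Finsupp.mem_support_iff.mp hl) (h l hc)
    simp [pt, hlτ]
  · rw [if_neg h]
    push_neg at h
    obtain ⟨l, hl1, hl2⟩ := h
    refine Finset.prod_eq_zero (Finsupp.mem_support_iff.mpr hl2) ?_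
    rw [show (pt τ' l : K) = 0 by simp [pt, hl1]]
    exact zero_pow hl2

lemma IE {ι : Type*} (P : MvPolynomial (Fin n) K) (T : ι → Set (Fin n)) (S : Finset ι)
    (B : Set (Fin n))
    (h0 : ∀ S' : Finset ι, S' ⊆ S → S'.Nonempty →
      PSum P (fun u => ∀ l, l ∉ (B ∩ ⋂ i ∈ (S' : Set ι), T i) → u l = 0) = 0) :
    PSum P (fun u => (∀ l, l ∉ B → u l = 0) ∧ ∃ i ∈ S, ∀ l, l ∉ T i → u l = 0) = 0 := by
  classical
  induction S using Finset.induction_on generalizing B with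
  | empty =>
    rw [PSum_congr (Q' := fun _ => False) (fun u => ?_), PSum_false]
    simp
  | @insert i₀ S hi₀ ih =>
    have hsplit : PSum P
        (fun u => (∀ l, l ∉ B → u l = 0) ∧ ∃ i ∈ insert i₀ S, ∀ l, l ∉ T i → u l = 0)
        = PSum P (fun u =>
            ((∀ l, l ∉ B → u l = 0) ∧ ∃ i ∈ S, ∀ l, l ∉ T i → u l = 0)
            ∨ (∀ l, l ∉ (B ∩ T i₀) → u l = 0)) := by
      refine PSum_congr fun u => ?_
      constructor
      · rintro ⟨hB, i, hi, hT⟩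
        rcases Finset.mem_insert.mp hi with rfl | hiS
        · right
          intro l hl
          by_cases hB' : l ∈ B
          · exact hT l (fun hmem => hl ⟨hB', hmem⟩)
          · exact hB l hB'
        · exact Or.inl ⟨hB, i, hiS, hT⟩
      · rintro (⟨hB, i, hiS, hT⟩ | hR)
        · exact ⟨hB, i, Finset.mem_insert_of_mem hiS, hT⟩
        · exact ⟨fun l hl => hR l (fun hmem => hl hmem.1), i₀, Finset.mem_insert_self _ _,
            fun l hl => hR l (fun hmem => hl hmem.2)⟩
    have hQ : PSum P
        (fun u => (∀ l, l ∉ B → u l = 0) ∧ ∃ i ∈ S, ∀ l, l ∉ T i → u l = 0) = 0 :=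
      ih B (fun S' hS' hne => h0 S' (hS'.trans (Finset.subset_insert _ _)) hne) 
    have hR : PSum P (fun u => ∀ l, l ∉ (B ∩ T i₀) → u l = 0) = 0 := by
      have h1 := h0 {i₀} (by simp [Finset.singleton_subset_iff]) ⟨i₀, by simp⟩
      rw [PSum_congr (Q' := fun u => ∀ l, l ∉ (B ∩ T i₀) → u l = 0) (fun u => ?_)] at h1
      · exact h1
      · have hset : B ∩ ⋂ i ∈ (({i₀} : Finset ι) : Set ι), T i = B ∩ T i₀ := by simp
        rw [hset]
    have hQR : PSum P
        (fun u => ((∀ l, l ∉ B → u l = 0) ∧ ∃ i ∈ S, ∀ l, l ∉ T i → u l = 0)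
          ∧ (∀ l, l ∉ (B ∩ T i₀) → u l = 0)) = 0 := by
      rw [PSum_congr (Q' := fun u => (∀ l, l ∉ (B ∩ T i₀) → u l = 0)
          ∧ ∃ i ∈ S, ∀ l, l ∉ T i → u l = 0) (fun u => ?_)]
      · refine ih (B ∩ T i₀) (fun S' hS' hne => ?_)
        have h1 := h0 (insert i₀ S') (Finset.insert_subset_insert i₀ hS')
          ⟨i₀, Finset.mem_insert_self _ _⟩
        rw [PSum_congr (Q' := fun u =>
            ∀ l, l ∉ ((B ∩ T i₀) ∩ ⋂ i ∈ (S' : Set ι), T i) → u l = 0) (fun u => ?_)] at h1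
        · exact h1
        · have hset : B ∩ ⋂ i ∈ ((insert i₀ S' : Finset ι) : Set ι), T i
              = (B ∩ T i₀) ∩ ⋂ i ∈ (S' : Set ι), T i := by
            rw [Finset.coe_insert, Set.biInter_insert, Set.inter_assoc]
          rw [hset]
      · constructor
        · rintro ⟨⟨_, hex⟩, hBT⟩
          exact ⟨hBT, hex⟩
        · rintro ⟨hBT, hex⟩
          exact ⟨⟨fun l hl => hBT l (fun hmem => hl hmem.1), hex⟩, hBT⟩
    rw [hsplit, PSum_or, hQ, hR, hQR]
    ring

end Alg


section Key

variable {K : Type*} [Field K] {n m t s : ℕ}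

lemma int_scale {n' : ℕ} (lam : Fin n' → ℚ) :
    ∃ (μ : Fin n' → ℤ) (D : ℕ), 0 < D ∧ ∀ l, (μ l : ℚ) = lam l * D := by
  classical
  set D : ℕ := ∏ l', (lam l').den with hD
  have hDpos : 0 < D := Finset.prod_pos fun l _ => (lam l).den_pos
  refine ⟨fun l => (lam l).num * ((D / (lam l).den : ℕ) : ℤ), D, hDpos, fun l => ?_⟩
  have hdvd : (lam l).den ∣ D := Finset.dvd_prod_of_mem _ (Finset.mem_univ l)
  have hden : ((lam l).den : ℚ) ≠ 0 := by exact_mod_cast (lam l).den_pos.ne'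
  have hsplit : (D : ℚ) = ((lam l).den : ℚ) * ((D / (lam l).den : ℕ) : ℚ) := by
    rw [← Nat.cast_mul, Nat.mul_div_cancel' hdvd]
  rw [hsplit]
  push_cast
  rw [show lam l * (((lam l).den : ℚ) * ((D / (lam l).den : ℕ) : ℚ))
      = (lam l * ((lam l).den : ℚ)) * ((D / (lam l).den : ℕ) : ℚ) by ring]
  congr 1
  have h3 : ((lam l).num : ℚ) / ((lam l).den : ℚ) = lam l := Rat.num_div_den _
  calc ((lam l).num : ℚ) = ((lam l).num : ℚ) / ((lam l).den : ℚ) * ((lam l).den : ℚ) := by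
        field_simp
    _ = lam l * ((lam l).den : ℚ) := by rw [h3]

lemma keyLemma (L : AddSubgroup (Fin n → ℤ))
    (a : Fin n → Fin m → ℤ)
    (hA : ∀ u : Fin n → ℤ, u ∈ satSet L ↔ ∑ i, u i • a i = 0)
    (rvec : Fin t → Fin m → ℤ)
    (hr0 : ∀ i, castQ rvec i ≠ 0)
    (hray : ∀ i, IsFaceOf (posQ (castQ a)) (rayOf (castQ rvec i)))
    (E : Finset (Fin t))
    (hE1 : ¬ IsFaceOf (posQ (castQ a)) (posE (castQ rvec) E))
    (hE2 : ∀ E' : Finset (Fin t),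
      ¬ IsFaceOf (posQ (castQ a)) (posE (castQ rvec) E') →
      posE (castQ rvec) E' ⊆ posE (castQ rvec) E →
      posE (castQ rvec) E' = posE (castQ rvec) E)
    (hEstrict : ∀ E' : Finset (Fin t), E' ⊆ E → E' ≠ E →
      posE (castQ rvec) E' ≠ posE (castQ rvec) E)
    (F : Fin s → MvPolynomial (Fin n) K)
    (hrad : (latticeIdeal K L).radical = (Ideal.span (Set.range F)).radical) :
    ∃ (i : Fin s) (u : Fin n →₀ ℕ), u ∈ (F i).support ∧
      (∑ l, ((u l : ℚ)) • castQ a l) ∈ relintE (castQ rvec) E := by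
  classical
  set aQ : Fin n → Fin m → ℚ := castQ a with haQ
  set rQ : Fin t → Fin m → ℚ := castQ rvec with hrQ
  set σ : Set (Fin m → ℚ) := posQ aQ with hσ
  have hσcs : σ = cs aQ Set.univ := posQ_eq_cs aQ
  have haσ : ∀ l, aQ l ∈ σ := by
    intro l
    rw [hσcs]
    have h1 := cs_gen_mem (v := aQ) (S := Set.univ) (Set.mem_univ l) zero_le_one
    rwa [one_smul] at h1
  have hrσ : ∀ i, rQ i ∈ σ := by
    intro i
    obtain ⟨c, hc, heq⟩ := hray i
    have h1 : rQ i ∈ rayOf (rQ i) := ⟨1, zero_le_one, (one_smul _ _).symm⟩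
    rw [heq] at h1
    exact h1.1
  -- each extreme ray contains a generator aQ l
  have hgen : ∀ i : Fin t, ∃ l : Fin n, ∃ q : ℚ, 0 < q ∧ aQ l = q • rQ i := by
    intro i
    obtain ⟨d, hd, hsum⟩ : rQ i ∈ posQ aQ := hrσ i
    have hmem : (∑ l, d l • aQ l) ∈ rayOf (rQ i) := by
      rw [← hsum]
      exact ⟨1, zero_le_one, (one_smul _ _).symm⟩
    have hext := face_extract (hray i) d aQ hd (fun l _ => haσ l) hmem
    have h'' : ∀ l, ∃ q : ℚ, 0 ≤ q ∧ (d l ≠ 0 → aQ l = q • rQ i) := by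
      intro l
      by_cases hl : d l = 0
      · exact ⟨0, le_rfl, fun hc => (hc hl).elim⟩
      · obtain ⟨q, hq0, hqe⟩ := hext l hl
        exact ⟨q, hq0, fun _ => hqe⟩
    choose q hq0 hqe using h''
    have hterm : ∀ l, d l • aQ l = (d l * q l) • rQ i := by
      intro l
      by_cases hl : d l = 0
      · simp [hl]
      · rw [hqe l hl, smul_smul]
    have hsum2 : rQ i = (∑ l, d l * q l) • rQ i := by
      conv_lhs => rw [hsum]
      rw [Finset.sum_congr rfl (fun l _ => hterm l), ← Finset.sum_smul]
    have hs1 : (∑ l, d l * q l) = 1 := by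
      by_contra hne
      have h1 : (1 - ∑ l, d l * q l) • rQ i = 0 := by
        rw [sub_smul, one_smul, ← hsum2, sub_self]
      rcases smul_eq_zero.mp h1 with h | h
      · exact hne (by linarith [sub_eq_zero.mp (by linarith [h] : (1:ℚ) - ∑ l, d l * q l = 0)])
      · exact hr0 i h
    have hex : ∃ l, d l * q l ≠ 0 := by
      have : (∑ l, d l * q l) ≠ 0 := by rw [hs1]; norm_num
      obtain ⟨l, _, hl⟩ := Finset.exists_ne_zero_of_sum_ne_zero this
      exact ⟨l, hl⟩
    obtain ⟨l, hl⟩ := hex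
    have hdl : d l ≠ 0 := fun h => hl (by rw [h, zero_mul])
    have hql : q l ≠ 0 := fun h => hl (by rw [h, mul_zero])
    exact ⟨l, q l, lt_of_le_of_ne (hq0 l) (Ne.symm hql), hqe l hdl⟩
  set C : Set (Fin m → ℚ) := posE rQ E with hC
  set τ : Set (Fin n) := {l | aQ l ∈ C} with hτ
  have hCcs : C = cs rQ ↑E := posE_eq_cs rQ E
  -- the cone generated by the aQ l, l ∈ τ, is exactly C
  have hconeτ : cs aQ τ = C := by
    apply Set.Subset.antisymm
    · rintro x ⟨d, hd, hz, rfl⟩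
      rw [hCcs]
      refine cs_combo d aQ hd (fun l hl => ?_)
      have hlτ : l ∈ τ := by
        by_contra h
        exact hl (hz l h)
      rw [← hCcs]
      exact hlτ
    · intro x hx
      rw [hCcs] at hx
      obtain ⟨d, hd, hz, rfl⟩ := hx
      refine cs_combo d rQ hd (fun i hi => ?_)
      have hiE : i ∈ E := by
        by_contra h
        exact hi (hz i (by simpa using h))
      obtain ⟨l, q, hq, hal⟩ := hgen i
      have halC : aQ l ∈ C := by
        rw [hCcs, hal]
        exact cs_gen_mem (by simpa using hiE) (le_of_lt hq)
      have hlτ : l ∈ τ := halC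
      have hri : rQ i = q⁻¹ • aQ l := by
        rw [hal, smul_smul, inv_mul_cancel₀ (ne_of_gt hq), one_smul]
      rw [hri]
      have h1 := cs_gen_mem (v := aQ) (S := τ) hlτ (le_of_lt (inv_pos.mpr hq))
      exact h1
  -- Gordan dichotomy; the "functional" branch contradicts hE1
  have hlam : ∃ lam : Fin n → ℚ, (∀ l, l ∉ τ → 0 ≤ lam l) ∧ (∃ l, l ∉ τ ∧ 0 < lam l) ∧
      ∑ l, lam l • aQ l = 0 := by
    rcases gordan aQ τ with ⟨c, hc0, hcpos⟩ | h
    · exfalso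
      apply hE1
      refine ⟨c, ?_, ?_⟩
      · intro x hx
        obtain ⟨d, hd, rfl⟩ := hx
        rw [dot_eq, dot_sum_smul]
        refine Finset.sum_nonneg fun l _ => ?_
        by_cases hl : l ∈ τ
        · rw [hc0 l hl, mul_zero]
        · exact mul_nonneg (hd l) (le_of_lt (hcpos l hl))
      · apply Set.Subset.antisymm
        · intro x hx
          have hx' : x ∈ cs aQ τ := by rw [hconeτ]; exact hx
          obtain ⟨d, hd, hz, rfl⟩ := hx'
          constructor
          · rw [hσcs]
            exact cs_combo d aQ hd (fun l _ => by
              rw [← hσcs]; exact haσ l)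
          · show (∑ j, c j * (∑ l, d l • aQ l) j) = 0
            rw [dot_eq, dot_sum_smul]
            refine Finset.sum_eq_zero fun l _ => ?_
            by_cases hl : l ∈ τ
            · rw [hc0 l hl, mul_zero]
            · rw [hz l hl, zero_mul]
        · rintro x ⟨hxσ, hxz⟩
          obtain ⟨d, hd, rfl⟩ := hxσ
          rw [Set.mem_setOf_eq, dot_eq, dot_sum_smul] at hxz
          have hnn : ∀ l ∈ Finset.univ, 0 ≤ d l * dot c (aQ l) := by
            intro l _
            by_cases hl : l ∈ τ
            · rw [hc0 l hl, mul_zero]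
            · exact mul_nonneg (hd l) (le_of_lt (hcpos l hl))
          have hall := (Finset.sum_eq_zero_iff_of_nonneg hnn).mp hxz
          have hzz : ∀ l, l ∉ τ → d l = 0 := by
            intro l hl
            rcases mul_eq_zero.mp (hall l (Finset.mem_univ l)) with h | h
            · exact h
            · exact absurd h (ne_of_gt (hcpos l hl))
          rw [← hconeτ]
          exact ⟨d, hd, hzz, rfl⟩
    · exact h
  obtain ⟨lam, hlnn, ⟨l0, hl0τ, hl0pos⟩, hlsum⟩ := hlam
  -- integral vector in L with controlled signs
  have hw : ∃ w : Fin n → ℤ, w ∈ L ∧ 0 < w l0 ∧ (∀ l, l ∉ τ → 0 ≤ w l) := by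
    obtain ⟨μ, D, hDpos, hμ⟩ := int_scale lam
    have hDQ : (0:ℚ) < (D:ℚ) := by exact_mod_cast hDpos
    have hμsign : ∀ l, 0 ≤ lam l → 0 ≤ μ l := by
      intro l hl
      have : (0:ℚ) ≤ (μ l : ℚ) := by rw [hμ l]; positivity
      exact_mod_cast this
    have hμpos : 0 < μ l0 := by
      have : (0:ℚ) < (μ l0 : ℚ) := by rw [hμ l0]; positivity
      exact_mod_cast this
    have hμsum : ∑ l, μ l • a l = 0 := by
      funext jj
      have hcast : ((∑ l, μ l • a l) jj : ℚ) = 0 := by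
        have h1 : ((∑ l, μ l • a l) jj : ℚ) = ∑ l, (μ l : ℚ) * (a l jj : ℚ) := by
          push_cast [Finset.sum_apply]
          refine Finset.sum_congr rfl fun l _ => ?_
          push_cast [Pi.smul_apply, smul_eq_mul]
          ring
        rw [h1]
        have h2 : ∑ l, (μ l : ℚ) * (a l jj : ℚ) = (D:ℚ) * ∑ l, lam l * aQ l jj := by
          rw [Finset.mul_sum]
          refine Finset.sum_congr rfl fun l _ => ?_
          rw [hμ l, haQ]
          show lam l * (D:ℚ) * ((castQ a l) jj) = (D:ℚ) * (lam l * castQ a l jj)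
          ring
        rw [h2]
        have h3 : ∑ l, lam l * aQ l jj = 0 := by
          have := congrFun hlsum jj
          simpa [Finset.sum_apply] using this
        rw [h3, mul_zero]
      have : ((∑ l, μ l • a l) jj : ℚ) = ((0:ℤ) : ℚ) := by rw [hcast]; norm_num
      have h4 : (∑ l, μ l • a l) jj = (0:ℤ) := by exact_mod_cast this
      simpa using h4
    have hμsat : μ ∈ satSet L := (hA μ).mpr hμsum
    obtain ⟨d0, hd0ne, hd0mem⟩ := hμsat
    refine ⟨|d0| • μ, ?_, ?_, ?_⟩
    · rcases abs_choice d0 with h | h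
      · rw [h]; exact hd0mem
      · rw [h, neg_smul]; exact neg_mem hd0mem
    · have : 0 < |d0| := abs_pos.mpr hd0ne
      have h5 : (|d0| • μ) l0 = |d0| * μ l0 := rfl
      rw [h5]
      positivity
    · intro l hl
      have h5 : (|d0| • μ) l = |d0| * μ l := rfl
      rw [h5]
      exact mul_nonneg (abs_nonneg d0) (hμsign l (hlnn l hl))
  obtain ⟨w, hwL, hwl0, hwτ⟩ := hw
  -- the binomial of w evaluates to -1 at the characteristic point of τ
  have hppapp : ∀ (u : Fin n → ℤ) (l : Fin n), (_root_.posPart u) l = (u l).toNat := by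
    intro u l
    rfl
  set g₀ : MvPolynomial (Fin n) K :=
    monomial (posPart w) (1 : K) - monomial (posPart (-w)) (1 : K) with hg₀
  have hevalg₀ : eval (pt τ) g₀ = -1 := by
    rw [hg₀, map_sub, eval_pt_monomial, eval_pt_monomial]
    have hP : ¬ (∀ l, l ∉ τ → (_root_.posPart w) l = 0) := by
      intro h
      have h1 := h l0 hl0τ
      rw [hppapp] at h1
      rw [Int.toNat_eq_zero] at h1
      omega
    have hN : ∀ l, l ∉ τ → (_root_.posPart (-w)) l = 0 := by
      intro l hl
      rw [hppapp]
      rw [Int.toNat_eq_zero]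
      have := hwτ l hl
      simp only [Pi.neg_apply]
      omega
    rw [if_neg hP, if_pos hN]
    norm_num
  -- some F i does not vanish at the characteristic point of τ
  have hex_i : ∃ i, eval (pt τ) (F i) ≠ 0 := by
    have hg₀I : g₀ ∈ latticeIdeal K L := by
      apply Ideal.subset_span
      exact ⟨w, hwL, rfl⟩
    have hg₀rad : g₀ ∈ (Ideal.span (Set.range F)).radical := by
      rw [← hrad]
      exact Ideal.le_radical hg₀I
    obtain ⟨k, hk⟩ := Ideal.mem_radical_iff.mp hg₀rad
    obtain ⟨co, hco⟩ := Ideal.mem_span_range_iff_exists_fun.mp hk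
    by_contra hall
    push_neg at hall
    have h1 : eval (pt τ) (g₀ ^ k) = (-1) ^ k := by
      rw [map_pow, hevalg₀]
    have h2 : eval (pt τ) (g₀ ^ k) = 0 := by
      rw [← hco, map_sum]
      refine Finset.sum_eq_zero fun i _ => ?_
      rw [map_mul, hall i, mul_zero]
    rw [h1] at h2
    exact pow_ne_zero k (neg_ne_zero.mpr one_ne_zero) h2
  -- vanishing of every F i at characteristic points of faces
  have hcastdeg : ∀ v : Fin n → ℤ, (∑ l, v l • a l = 0) → ∑ l, ((v l : ℚ)) • aQ l = 0 := by
    intro v hv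
    funext jj
    have h1 := congrFun hv jj
    simp only [Finset.sum_apply, Pi.smul_apply, smul_eq_mul, Pi.zero_apply] at h1 ⊢
    simp only [haQ]
    show ∑ l, (v l : ℚ) * ((a l jj : ℚ)) = 0
    exact_mod_cast h1
  have hvanish : ∀ (G : Set (Fin m → ℚ)), IsFaceOf σ G →
      ∀ i', eval (pt {l | aQ l ∈ G}) (F i') = 0 := by
    intro G hG i'
    set τG : Set (Fin n) := {l | aQ l ∈ G} with hτG
    have hGcs : IsFaceOf (cs aQ Set.univ) G := by rw [← hσcs]; exact hG
    have honeway : ∀ v : Fin n → ℤ, v ∈ L → (∀ l, l ∉ τG → (_root_.posPart v) l = 0) →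
        (∀ l, l ∉ τG → (_root_.posPart (-v)) l = 0) := by
      intro v hvL hP
      have hdegv : ∑ l, ((v l : ℚ)) • aQ l = 0 :=
        hcastdeg v ((hA v).mp ⟨1, one_ne_zero, by rwa [one_smul]⟩)
      have hplus : (∑ l, (((_root_.posPart v) l : ℚ)) • aQ l) ∈ G := by
        refine face_combo hGcs (fun l => (((_root_.posPart v) l : ℚ))) aQ
          (fun l => Nat.cast_nonneg _) (fun l hl => ?_)
        have hppne : (_root_.posPart v) l ≠ 0 := by
          intro h
          exact hl (by show (((_root_.posPart v) l : ℚ)) = 0; rw [h]; norm_num)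
        have hlτ : l ∈ τG := by
          by_contra h
          exact hppne (hP l h)
        exact hlτ
      have hsub : ∀ l : Fin n, (((_root_.posPart v) l : ℚ)) - (((_root_.posPart (-v)) l : ℚ))
          = (v l : ℚ) := by
        intro l
        rw [hppapp, hppapp]
        have h2 := Int.toNat_sub_toNat_neg (v l)
        show (((v l).toNat : ℚ)) - ((((-v) l).toNat : ℚ)) = (v l : ℚ)
        have h3 : ((-v) l) = -(v l) := rfl
        rw [h3]
        exact_mod_cast h2
      have hdiff : (∑ l, (((_root_.posPart v) l : ℚ)) • aQ l)
          - (∑ l, (((_root_.posPart (-v)) l : ℚ)) • aQ l) = 0 := by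
        rw [← Finset.sum_sub_distrib]
        rw [Finset.sum_congr rfl (fun l _ => by rw [← sub_smul, hsub l])]
        exact hdegv
      have hminus : (∑ l, (((_root_.posPart (-v)) l : ℚ)) • aQ l) ∈ G := by
        have heq := sub_eq_zero.mp hdiff
        rw [← heq]
        exact hplus
      have hext := face_extract hG (fun l => (((_root_.posPart (-v)) l : ℚ))) aQ
        (fun l => Nat.cast_nonneg _) (fun l _ => haσ l) hminus
      intro l hl
      by_contra hne
      have hcast : (((_root_.posPart (-v)) l : ℚ)) ≠ 0 := Nat.cast_ne_zero.mpr hne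
      exact hl (hext l hcast)
    have hgenvanish : ∀ g' ∈ {P : MvPolynomial (Fin n) K |
        ∃ u ∈ L, P = monomial (_root_.posPart u) (1:K) - monomial (_root_.posPart (-u)) 1},
        eval (pt τG) g' = 0 := by
      rintro g' ⟨u, huL, rfl⟩
      rw [map_sub, eval_pt_monomial, eval_pt_monomial]
      by_cases hP : ∀ l, l ∉ τG → (_root_.posPart u) l = 0
      · have hN := honeway u huL hP
        rw [if_pos hP, if_pos hN, sub_self]
      · have hN : ¬ (∀ l, l ∉ τG → (_root_.posPart (-u)) l = 0) := by
          intro hN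
          apply hP
          have h4 := honeway (-u) (neg_mem huL) hN
          rw [neg_neg] at h4
          exact h4
        rw [if_neg hP, if_neg hN, sub_self]
    have hker : latticeIdeal K L ≤ RingHom.ker (eval (pt τG) : MvPolynomial (Fin n) K →+* K) := by
      rw [latticeIdeal, Ideal.span_le]
      intro g' hg'
      rw [SetLike.mem_coe, RingHom.mem_ker]
      exact hgenvanish g' hg'
    have hFrad : F i' ∈ (latticeIdeal K L).radical := by
      rw [hrad]
      exact Ideal.le_radical (Ideal.subset_span ⟨i', rfl⟩)
    obtain ⟨k', hk'⟩ := Ideal.mem_radical_iff.mp hFrad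
    have h0 : eval (pt τG) (F i' ^ k') = 0 := RingHom.mem_ker.mp (hker hk')
    rw [map_pow] at h0
    rcases Nat.eq_zero_or_pos k' with hk0 | hk0
    · rw [hk0, pow_zero] at h0
      exact absurd h0 one_ne_zero
    · exact pow_eq_zero_iff hk0.ne' |>.mp h0
  -- proper subcones of C are faces
  have hface : ∀ E' : Finset (Fin t), E' ⊆ E → E' ≠ E → IsFaceOf σ (posE rQ E') := by
    intro E' hsub hne
    by_contra hnf
    exact hEstrict E' hsub hne (hE2 E' hnf (posE_mono hsub))
  -- main contradiction
  by_contra hcon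
  push_neg at hcon
  obtain ⟨i, hi⟩ := hex_i
  apply hi
  rw [eval_pt]
  set S : Finset (Finset (Fin t)) := E.powerset.erase E with hS
  set T : Finset (Fin t) → Set (Fin n) := fun E' => {l | aQ l ∈ posE rQ E'} with hT
  have hcover : ∀ u ∈ (F i).support, (∀ l, l ∉ τ → u l = 0) →
      ∃ E' ∈ S, ∀ l, l ∉ T E' → u l = 0 := by
    intro u hu hcov
    have hdeg : (∑ l, ((u l : ℚ)) • aQ l) ∈ C := by
      rw [← hconeτ]
      refine ⟨fun l => (u l : ℚ), fun l => Nat.cast_nonneg _, fun l hl => ?_, rfl⟩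
      show ((u l : ℚ)) = 0
      rw [hcov l hl]
      norm_num
    have hnotrel : (∑ l, ((u l : ℚ)) • aQ l) ∉ relintE rQ E := hcon i u hu
    obtain ⟨d, hd0, hdz, hdeq⟩ := hdeg
    set E'' := E.filter (fun k => d k ≠ 0) with hE''
    have hE''sub : E'' ⊆ E := Finset.filter_subset _ _
    have hE''ne : E'' ≠ E := by
      intro heq
      apply hnotrel
      refine ⟨d, ?_, hdz, hdeq⟩
      intro k hk
      have hk'' : k ∈ E'' := heq ▸ hk
      have hne := (Finset.mem_filter.mp hk'').2
      exact lt_of_le_of_ne (hd0 k) (Ne.symm hne)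
    have hmem'' : (∑ l, ((u l : ℚ)) • aQ l) ∈ posE rQ E'' := by
      refine ⟨d, hd0, ?_, hdeq⟩
      intro k hk
      by_cases hkE : k ∈ E
      · by_contra hne
        exact hk (Finset.mem_filter.mpr ⟨hkE, hne⟩)
      · exact hdz k hkE
    have hfc := hface E'' hE''sub hE''ne
    have hext := face_extract hfc (fun l => ((u l : ℚ))) aQ (fun l => Nat.cast_nonneg _)
      (fun l _ => haσ l) hmem''
    refine ⟨E'', Finset.mem_erase.mpr ⟨hE''ne, Finset.mem_powerset.mpr hE''sub⟩, ?_⟩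
    intro l hl
    by_contra hne
    have hcast : ((u l : ℚ)) ≠ 0 := Nat.cast_ne_zero.mpr hne
    exact hl (hext l hcast)
  have hcongr : PSum (F i) (fun u => ∀ l, l ∉ τ → u l = 0)
      = PSum (F i) (fun u => (∀ l, l ∉ τ → u l = 0) ∧
          ∃ E' ∈ S, ∀ l, l ∉ T E' → u l = 0) := by
    refine PSum_congr' fun u hu => ?_
    constructor
    · intro h
      exact ⟨h, hcover u hu h⟩
    · exact fun h => h.1
  rw [hcongr]
  refine IE (F i) T S τ (fun S' hS' hne => ?_)
  have hfaces : ∀ E' ∈ S', IsFaceOf σ (posE rQ E') := by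
    intro E' hE'
    have hmem := hS' hE'
    rw [hS] at hmem
    obtain ⟨hne', hsub'⟩ := Finset.mem_erase.mp hmem
    exact hface E' (Finset.mem_powerset.mp hsub') hne'
  have hG' : IsFaceOf σ (⋂ E' ∈ (S' : Set (Finset (Fin t))), posE rQ E') :=
    face_biInter S' hne hfaces
  have h0 := hvanish _ hG' i
  rw [eval_pt] at h0
  have hmemiff : ∀ l : Fin n, l ∈ (τ ∩ ⋂ E' ∈ (S' : Set (Finset (Fin t))), T E')
      ↔ aQ l ∈ (⋂ E' ∈ (S' : Set (Finset (Fin t))), posE rQ E') := by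
    intro l
    constructor
    · rintro ⟨-, hl2⟩
      rw [Set.mem_iInter₂] at hl2 ⊢
      intro E' hE'
      exact hl2 E' hE'
    · intro hl
      rw [Set.mem_iInter₂] at hl
      constructor
      · obtain ⟨E'0, hE'0⟩ := hne
        have h1 : aQ l ∈ posE rQ E'0 := hl E'0 (by exact_mod_cast hE'0)
        have hsub0 : E'0 ⊆ E := by
          have hmem := hS' hE'0
          rw [hS] at hmem
          exact Finset.mem_powerset.mp (Finset.mem_erase.mp hmem).2
        exact posE_mono hsub0 h1
      · rw [Set.mem_iInter₂]
        intro E' hE'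
        exact hl E' hE'
  rw [PSum_congr (Q' := fun u => ∀ l, l ∉ {l | aQ l ∈
      (⋂ E' ∈ (S' : Set (Finset (Fin t))), posE rQ E')} → u l = 0) (fun u => ?_)]
  · exact h0
  · constructor
    · intro h l hl
      exact h l (fun hmem => hl ((hmemiff l).mp hmem))
    · intro h l hl
      exact h l (fun hmem => hl ((hmemiff l).mpr hmem))

end Key

end Stmt18Aux

/-- if `F₁,…,Fₛ` generate `rad(I_L)` up to radical, then the total number of
`L'`-homogeneous components of the `Fᵢ` is at least `δ(D_{L'}^L)_Ω`. -/
theorem stmt18 {K : Type*} [Field K] {n m t f r' s : ℕ}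
    (L L' : AddSubgroup (Fin n → ℤ))
    (hLpos : ∀ u ∈ L, (∀ i, 0 ≤ u i) → u = (0 : Fin n → ℤ))
    (hLL' : L ≤ L')
    (a : Fin n → Fin m → ℤ)
    (hA : ∀ u : Fin n → ℤ, u ∈ satSet L ↔ ∑ i, u i • a i = 0)
    (b : Fin n → Fin r' → ℤ)
    (hB : ∀ u : Fin n → ℤ, u ∈ satSet L' ↔ ∑ i, u i • b i = 0)
    (rvec : Fin t → Fin m → ℤ)
    (hr0 : ∀ i, castQ rvec i ≠ 0)
    (hray : ∀ i, IsFaceOf (posQ (castQ a)) (rayOf (castQ rvec i)))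
    (hrinj : ∀ i j : Fin t, rayOf (castQ rvec i) = rayOf (castQ rvec j) → i = j)
    (hspan : posQ (castQ a) = posQ (castQ rvec))
    (𝔼 : Fin f → Finset (Fin t))
    (hE1 : ∀ j : Fin f, ¬ IsFaceOf (posQ (castQ a)) (posE (castQ rvec) (𝔼 j)))
    (hE2 : ∀ (j : Fin f) (E : Finset (Fin t)),
      ¬ IsFaceOf (posQ (castQ a)) (posE (castQ rvec) E) →
      posE (castQ rvec) E ⊆ posE (castQ rvec) (𝔼 j) →
      posE (castQ rvec) E = posE (castQ rvec) (𝔼 j))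
    (hE3 : ∀ E : Finset (Fin t), ¬ IsFaceOf (posQ (castQ a)) (posE (castQ rvec) E) →
      ∃ j : Fin f, posE (castQ rvec) (𝔼 j) ⊆ posE (castQ rvec) E)
    (hEinj : ∀ j k : Fin f, posE (castQ rvec) (𝔼 j) = posE (castQ rvec) (𝔼 k) → j = k)
    (π : (Fin m → ℚ) →ₗ[ℚ] (Fin r' → ℚ))
    (hπ : ∀ i, π (castQ a i) = castQ b i)
    (F : Fin s → MvPolynomial (Fin n) K)
    (hrad : (latticeIdeal K L).radical = (Ideal.span (Set.range F)).radical) :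
    deltaOmega (fun i => π (castQ rvec i)) 𝔼 ≤ ∑ i, numComponents L' (F i) := by
  classical
  set aQ : Fin n → Fin m → ℚ := castQ a with haQ
  set rQ : Fin t → Fin m → ℚ := castQ rvec with hrQ
  set rB : Fin t → Fin r' → ℚ := fun i => π (castQ rvec i) with hrB
  -- rQ i lies in the cone
  have hrσ : ∀ i, rQ i ∈ posQ aQ := by
    intro i
    obtain ⟨c, hc, heq⟩ := hray i
    have h1 : rQ i ∈ rayOf (rQ i) := ⟨1, zero_le_one, (one_smul _ _).symm⟩
    rw [heq] at h1
    exact h1.1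
  -- strictness of subcones
  have hEstrict : ∀ (j : Fin f) (E' : Finset (Fin t)), E' ⊆ 𝔼 j → E' ≠ 𝔼 j →
      posE rQ E' ≠ posE rQ (𝔼 j) := by
    intro j E' hsub hne heq
    obtain ⟨i, hiE, hiE'⟩ := Finset.exists_of_ssubset (lt_of_le_of_ne hsub hne)
    have hri : rQ i ∈ posE rQ (𝔼 j) := by
      rw [Stmt18Aux.posE_eq_cs]
      have h1 := Stmt18Aux.cs_gen_mem (v := rQ) (S := (𝔼 j : Set (Fin t)))
        (by simpa using hiE) zero_le_one
      rwa [one_smul] at h1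
    rw [← heq] at hri
    obtain ⟨d, hd, hz, hsum⟩ := hri
    have hext := Stmt18Aux.face_extract (hray i) d rQ hd (fun k _ => hrσ k)
      (by rw [← hsum]; exact ⟨1, zero_le_one, (one_smul _ _).symm⟩)
    have hzero : ∀ k, d k = 0 := by
      intro k
      by_contra hk
      obtain ⟨q, hq0, hqe⟩ := hext k hk
      have hqne : q ≠ 0 := by
        intro h
        rw [h, zero_smul] at hqe
        exact hr0 k hqe
      have hqpos : 0 < q := lt_of_le_of_ne hq0 (Ne.symm hqne)
      have hrayeq : rayOf (rQ k) = rayOf (rQ i) := by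
        ext x
        constructor
        · rintro ⟨sθ, hs0, rfl⟩
          exact ⟨sθ * q, mul_nonneg hs0 (le_of_lt hqpos), by rw [hqe, smul_smul]⟩
        · rintro ⟨sθ, hs0, rfl⟩
          refine ⟨sθ / q, div_nonneg hs0 (le_of_lt hqpos), ?_⟩
          rw [hqe, smul_smul, div_mul_cancel₀ _ hqne]
      have hki : k = i := hrinj k i hrayeq
      rw [hki] at hk
      exact hk (hz i hiE')
    rw [Finset.sum_congr rfl (fun k _ => by rw [hzero k, zero_smul])] at hsum
    rw [Finset.sum_const_zero] at hsum
    exact hr0 i hsum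
  -- the key lemma applied to each vertex
  have key : ∀ j : Fin f, ∃ (i : Fin s) (u : Fin n →₀ ℕ), u ∈ (F i).support ∧
      (∑ l, ((u l : ℚ)) • castQ a l) ∈ relintE (castQ rvec) (𝔼 j) := fun j =>
    Stmt18Aux.keyLemma L a hA rvec hr0 hray (𝔼 j) (hE1 j) (hE2 j) (hEstrict j) F hrad
  choose iv uv husup hurel using key
  set Q' := (Fin n → ℤ) ⧸ L' with hQ'
  letI instQ : DecidableEq Q' := Classical.decEq _
  set mkf : (Fin n →₀ ℕ) → Q' := fun u =>
    (QuotientAddGroup.mk (fun j => (u j : ℤ)) : Q') with hmkf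
  set cc : Fin f → Fin s × Q' := fun j => (iv j, mkf (uv j)) with hcc
  set Pt : Fin f → Fin r' → ℚ := fun j => π (∑ l, ((uv j l : ℚ)) • castQ a l) with hPt
  have hPtmem : ∀ j, Pt j ∈ relintE rB (𝔼 j) := by
    intro j
    obtain ⟨d, h1, h2, h3⟩ := hurel j
    refine ⟨d, h1, h2, ?_⟩
    rw [hPt]
    show π (∑ l, ((uv j l : ℚ)) • castQ a l) = _
    rw [h3, map_sum]
    refine Finset.sum_congr rfl fun k _ => ?_
    rw [map_smul]
  have hPtdeg : ∀ j, Pt j = ∑ l, ((uv j l : ℚ)) • castQ b l := by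
    intro j
    rw [hPt]
    show π (∑ l, ((uv j l : ℚ)) • castQ a l) = _
    rw [map_sum]
    refine Finset.sum_congr rfl fun l _ => ?_
    rw [map_smul, hπ l]
  have hPteq : ∀ j j', mkf (uv j) = mkf (uv j') → Pt j = Pt j' := by
    intro j j' h
    have hdiff : (fun l => ((uv j l : ℤ))) - (fun l => ((uv j' l : ℤ))) ∈ L' :=
      QuotientAddGroup.eq_iff_sub_mem.mp h
    have hsat : ((fun l => ((uv j l : ℤ))) - (fun l => ((uv j' l : ℤ)))) ∈ satSet L' :=
      ⟨1, one_ne_zero, by rwa [one_smul]⟩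
    have hz := (hB _).mp hsat
    have hzQ : ∑ l, (((uv j l : ℚ)) - ((uv j' l : ℚ))) • castQ b l = 0 := by
      funext jj
      have h1 := congrFun hz jj
      simp only [Finset.sum_apply, Pi.smul_apply, smul_eq_mul, Pi.zero_apply, Pi.sub_apply] at h1 ⊢
      show ∑ l, (((uv j l : ℚ)) - ((uv j' l : ℚ))) * ((b l jj : ℚ)) = 0
      exact_mod_cast h1
    rw [hPtdeg j, hPtdeg j']
    have h2 : (∑ l, ((uv j l : ℚ)) • castQ b l) - (∑ l, ((uv j' l : ℚ)) • castQ b l) = 0 := by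
      rw [← Finset.sum_sub_distrib]
      rw [Finset.sum_congr rfl (fun l _ => (sub_smul _ _ _).symm)]
      exact hzQ
    exact sub_eq_zero.mp h2
  set M : Finset (Finset (Fin f)) :=
    (Finset.univ.image cc).image (fun v => Finset.univ.filter (fun j => cc j = v)) with hM
  have hmatch : IsOmegaMatching rB 𝔼 M := by
    constructor
    · intro T hT
      obtain ⟨v, hv, rfl⟩ := Finset.mem_image.mp hT
      obtain ⟨j₀, _, hj₀⟩ := Finset.mem_image.mp hv
      constructor
      · exact ⟨j₀, Finset.mem_filter.mpr ⟨Finset.mem_univ _, hj₀⟩⟩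
      · refine ⟨Pt j₀, ?_⟩
        rw [Set.mem_iInter₂]
        intro j hj
        have hjT : cc j = v := (Finset.mem_filter.mp (Finset.mem_coe.mp hj)).2
        have hclass : mkf (uv j) = mkf (uv j₀) := by
          have := hjT.trans hj₀.symm
          exact congrArg Prod.snd this
        rw [← hPteq j j₀ hclass]
        exact hPtmem j
    · intro T1 h1 T2 h2 hne
      obtain ⟨v1, _, rfl⟩ := Finset.mem_image.mp (Finset.mem_coe.mp h1)
      obtain ⟨v2, _, rfl⟩ := Finset.mem_image.mp (Finset.mem_coe.mp h2)
      have hv12 : v1 ≠ v2 := fun h => hne (by rw [h])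
      rw [Finset.disjoint_left]
      intro j hj1 hj2
      exact hv12 (((Finset.mem_filter.mp hj1).2).symm.trans (Finset.mem_filter.mp hj2).2)
  have hmax : ∀ M', IsOmegaMatching rB 𝔼 M' → suppCard M' ≤ suppCard M := by
    intro M' _
    have h2 : M.biUnion id = Finset.univ := by
      apply Finset.eq_univ_iff_forall.mpr
      intro j
      apply Finset.mem_biUnion.mpr
      refine ⟨Finset.univ.filter (fun j' => cc j' = cc j), ?_, ?_⟩
      · exact Finset.mem_image.mpr ⟨cc j, Finset.mem_image.mpr ⟨j, Finset.mem_univ _, rfl⟩, rfl⟩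
      · exact Finset.mem_filter.mpr ⟨Finset.mem_univ _, rfl⟩
    unfold suppCard
    rw [h2]
    exact Finset.card_le_univ _
  have hδ : deltaOmega rB 𝔼 ≤ M.card := Nat.sInf_le ⟨M, hmatch, rfl, hmax⟩
  have hsub : Subsingleton (DecidableEq Q') :=
    ⟨fun i1 i2 => funext fun x => funext fun y => Subsingleton.elim _ _⟩
  have hcard : M.card ≤ ∑ i, numComponents L' (F i) := by
    calc M.card ≤ (Finset.univ.image cc).card := Finset.card_image_le
      _ ≤ (Finset.univ.biUnion
            (fun i : Fin s => ((F i).support.image mkf).image (Prod.mk i))).card := by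
          apply Finset.card_le_card
          intro v hv
          obtain ⟨j, _, rfl⟩ := Finset.mem_image.mp hv
          apply Finset.mem_biUnion.mpr
          refine ⟨iv j, Finset.mem_univ _, ?_⟩
          exact Finset.mem_image.mpr ⟨mkf (uv j), Finset.mem_image.mpr ⟨uv j, husup j, rfl⟩, rfl⟩
      _ ≤ ∑ i, (((F i).support.image mkf).image (Prod.mk i)).card := Finset.card_biUnion_le
      _ ≤ ∑ i, numComponents L' (F i) := by
          refine Finset.sum_le_sum fun i _ => ?_
          refine le_trans Finset.card_image_le (le_of_eq ?_)
          unfold numComponents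
          rw [hmkf]
  exact le_trans hδ hcard
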